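/- arXiv:math/0412408 — 3 statements merged into one kernel-verified Lean document; each statement's English description precedes it below -/
import Mathlib

section
/- A vector u : S → ℝ ∪ {−∞} is super-harmonic (i.e. (Au)_i ≤ u_i for all i ∈ S) if and only if u_i = sup_{j ∈ S} (A*_{ij} + u_j) for all i ∈ S. -/
open Filter Topology

noncomputable section

namespace MaxPlus

variable {S : Type*}

/-- Weight of the path `p 0, p 1, ..., p n` for the kernel `A`. -/
def pathWeight (A : S → S → EReal) (p : ℕ → S) (n : ℕ) : EReal :=
  ∑ k ∈ Finset.range n, A (p k) (p (k + 1))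

/-- The max-plus star kernel `A*`: supremum of weights of paths of length `≥ 0`. -/
def star (A : S → S → EReal) (i j : S) : EReal :=
  ⨆ (n : ℕ) (p : ℕ → S) (_ : p 0 = i ∧ p n = j), pathWeight A p n

/-- The max-plus kernel `A⁺`: supremum of weights of paths of length `≥ 1`. -/
def plus (A : S → S → EReal) (i j : S) : EReal :=
  ⨆ (n : ℕ) (_ : 1 ≤ n) (p : ℕ → S) (_ : p 0 = i ∧ p n = j), pathWeight A p n

/-- `π` is a left super-harmonic row vector (with full support, being real valued). -/
def LeftSuperharmonic (A : S → S → EReal) (π : S → ℝ) : Prop :=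
  ∀ j, (⨆ i, ((π i : EReal) + A i j)) ≤ (π j : EReal)

/-- The Martin kernel `K_{ij} = A*_{ij} - π_j`. -/
def K (A : S → S → EReal) (π : S → ℝ) (i j : S) : EReal :=
  star A i j - (π j : EReal)

/-- `K♭_{ij} = A⁺_{ij} - π_j`. -/
def Kflat (A : S → S → EReal) (π : S → ℝ) (i j : S) : EReal :=
  plus A i j - (π j : EReal)

/-- The set `𝒦` of columns of the Martin kernel. -/
def kerCols (A : S → S → EReal) (π : S → ℝ) : Set (S → EReal) :=
  Set.range fun j => fun i => K A π i j

/-- The Martin space `ℳ`: closure of `𝒦` in the product topology. -/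
def martin (A : S → S → EReal) (π : S → ℝ) : Set (S → EReal) :=
  closure (kerCols A π)

/-- `μ_u(w)`: the limsup of `π_j + u_j` as `K_{·j} → w`. -/
def mu (A : S → S → EReal) (π : S → ℝ) (u : S → EReal) (w : S → EReal) : EReal :=
  ⨅ (W : Set (S → EReal)) (_ : W ∈ 𝓝 w),
    ⨆ (j : S) (_ : (fun i => K A π i j) ∈ W), ((π j : EReal) + u j)

/-- `w♭_i`: the liminf of `K♭_{ij}` as `K_{·j} → w`. -/
def flat (A : S → S → EReal) (π : S → ℝ) (w : S → EReal) (i : S) : EReal :=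
  ⨆ (W : Set (S → EReal)) (_ : W ∈ 𝓝 w),
    ⨅ (j : S) (_ : (fun i' => K A π i' j) ∈ W), Kflat A π i j

/-- The kernel `H(z,w) = μ_w(z)`. -/
def H (A : S → S → EReal) (π : S → ℝ) (z w : S → EReal) : EReal := mu A π w z

/-- The kernel `H♭(z,w) = μ_{w♭}(z)`. -/
def Hflat (A : S → S → EReal) (π : S → ℝ) (z w : S → EReal) : EReal :=
  mu A π (flat A π w) z

/-- The minimal Martin space `ℳᵐ = {w ∈ ℳ : H♭(w,w) = 0}`. -/
def martinMin (A : S → S → EReal) (π : S → ℝ) : Set (S → EReal) :=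
  {w | w ∈ martin A π ∧ Hflat A π w w = 0}

/-- The maximal circuit mean `ρ(A)`. -/
def maxCircuitMean (A : S → S → EReal) : EReal :=
  ⨆ (k : ℕ) (_ : 1 ≤ k) (p : ℕ → S) (_ : p k = p 0),
    (((k : ℝ)⁻¹ : ℝ) : EReal) * pathWeight A p k

/-- `α`-almost-geodesic with respect to the left super-harmonic vector `π`. -/
def IsAlmostGeodesic (A : S → S → EReal) (π : S → ℝ) (x : ℕ → S) : Prop :=
  ∃ α : ℝ, 0 ≤ α ∧ ∀ k : ℕ,
    (π (x k) : EReal) ≤ (α : EReal) + (π (x 0) : EReal) + pathWeight A x k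

/-- The set `𝒮` of `π`-integrable super-harmonic vectors. -/
def Sset (A : S → S → EReal) (π : S → ℝ) : Set (S → EReal) :=
  {u | (∀ i, u i ≠ ⊤) ∧ (∀ i, (⨆ j, A i j + u j) ≤ u i) ∧
    (⨆ j, ((π j : EReal) + u j)) < ⊤}

/-- The set `ℋ` of `π`-integrable harmonic vectors. -/
def Hset (A : S → S → EReal) (π : S → ℝ) : Set (S → EReal) :=
  {u | (∀ i, u i ≠ ⊤) ∧ (∀ i, (⨆ j, A i j + u j) = u i) ∧
    (⨆ j, ((π j : EReal) + u j)) < ⊤}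

/-- A vector is normalised if `sup_j (π_j + u_j) = 0`. -/
def Normalised (π : S → ℝ) (u : S → EReal) : Prop :=
  (⨆ j, ((π j : EReal) + u j)) = 0

/-- `ξ` is an extremal generator of `V`. -/
def ExtremalGen (V : Set (S → EReal)) (ξ : S → EReal) : Prop :=
  ξ ∈ V ∧ ξ ≠ (fun _ => (⊥ : EReal)) ∧
    ∀ u v, u ∈ V → v ∈ V → ξ = (fun i => u i ⊔ v i) → ξ = u ∨ ξ = v

end MaxPlus
namespace MaxPlus

/-- a vector `u : S → ℝ ∪ {−∞}` is super-harmonic (`(Au)_i ≤ u_i` for all `i`)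
iff `u_i = sup_j (A*_{ij} + u_j)` for all `i`. -/
theorem superharmonic_iff_star_fixed {S : Type*} (A : S → S → EReal)
    (hA : ∀ i j, A i j ≠ ⊤) (u : S → EReal) (hu : ∀ i, u i ≠ ⊤) :
    (∀ i, (⨆ j, A i j + u j) ≤ u i) ↔ (∀ i, u i = ⨆ j, star A i j + u j) := by
  constructor
  · intro h i
    have key : ∀ n (p : ℕ → S), pathWeight A p n + u (p n) ≤ u (p 0) := by
      intro n
      induction n with
      | zero => intro p; simp [pathWeight]
      | succ n ih =>
        intro p
        have h1 : pathWeight A p (n + 1) = pathWeight A p n + A (p n) (p (n + 1)) := by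
          simp [pathWeight, Finset.sum_range_succ]
        have h2 : A (p n) (p (n + 1)) + u (p (n + 1)) ≤ u (p n) :=
          le_trans (le_iSup (fun j => A (p n) j + u j) (p (n + 1))) (h (p n))
        calc pathWeight A p (n + 1) + u (p (n + 1))
            = pathWeight A p n + (A (p n) (p (n + 1)) + u (p (n + 1))) := by
              rw [h1, add_assoc]
          _ ≤ pathWeight A p n + u (p n) := add_le_add_right h2 _
          _ ≤ u (p 0) := ih p
    apply le_antisymm
    · have h0 : (0 : EReal) ≤ star A i i := by
        refine le_iSup_of_le 0 (le_iSup₂_of_le (fun _ => i) ⟨rfl, rfl⟩ ?_)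
        simp [pathWeight]
      have h1 : u i ≤ star A i i + u i := by
        simpa using add_le_add_left h0 (u i)
      exact le_trans h1 (le_iSup (fun j => star A i j + u j) i)
    · apply iSup_le
      intro j
      have hst : ∀ w ∈ {x | ∃ n, ∃ p : ℕ → S, (p 0 = i ∧ p n = j) ∧ pathWeight A p n = x},
          w + u j ≤ u i := by
        rintro w ⟨n, p, ⟨hp0, hpn⟩, rfl⟩
        rw [← hp0, ← hpn]; exact key n p
      rcases eq_or_ne (u j) ⊥ with hb | hb
      · simp [hb]
      · lift u j to ℝ using ⟨hu j, hb⟩ with r hr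
        rw [← EReal.le_sub_iff_add_le (Or.inl (EReal.coe_ne_bot r))
          (Or.inl (EReal.coe_ne_top r))]
        apply iSup_le; intro n; apply iSup_le; intro p; apply iSup_le; rintro ⟨hp0, hpn⟩
        rw [EReal.le_sub_iff_add_le (Or.inl (EReal.coe_ne_bot r))
          (Or.inl (EReal.coe_ne_top r))]
        rw [hr, ← hpn, ← hp0]; exact key n p
  · intro h i
    rw [h i]
    apply iSup_mono
    intro j
    apply add_le_add_left
    have : pathWeight A (fun k => if k = 0 then i else j) 1 ≤ star A i j :=
      le_iSup_of_le 1 (le_iSup₂_of_le (fun k => if k = 0 then i else j)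
        ⟨rfl, rfl⟩ le_rfl)
    simpa [pathWeight] using this


end MaxPlus
end
end

section
/- Let i, j ∈ S be distinct. Then K_{·i} = K_{·j} (equality of the two columns of the Martin kernel) if and only if ρ(A) = 0, both i and j are recurrent, and i and j are in the same recurrence class. -/
open Filter Topology

noncomputable section

namespace MaxPlus

section Aux

variable {S : Type*}

lemma pathWeight_zero (A : S → S → EReal) (p : ℕ → S) : pathWeight A p 0 = 0 := by
  simp [pathWeight]

lemma pathWeight_succ (A : S → S → EReal) (p : ℕ → S) (n : ℕ) :
    pathWeight A p (n + 1) = pathWeight A p n + A (p n) (p (n + 1)) :=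
  Finset.sum_range_succ _ _

lemma pi_add_pathWeight_le {A : S → S → EReal} {π : S → ℝ}
    (hπ : LeftSuperharmonic A π) (p : ℕ → S) :
    ∀ n, (π (p 0) : EReal) + pathWeight A p n ≤ (π (p n) : EReal) := by
  intro n
  induction n with
  | zero => simp [pathWeight_zero]
  | succ n ih =>
    have hstep : (π (p n) : EReal) + A (p n) (p (n + 1)) ≤ (π (p (n + 1)) : EReal) :=
      le_trans (le_iSup (fun i => (π i : EReal) + A i (p (n + 1))) (p n)) (hπ (p (n + 1)))
    calc (π (p 0) : EReal) + pathWeight A p (n + 1)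
        = ((π (p 0) : EReal) + pathWeight A p n) + A (p n) (p (n + 1)) := by
          rw [pathWeight_succ, ← add_assoc]
      _ ≤ (π (p n) : EReal) + A (p n) (p (n + 1)) := add_le_add ih le_rfl
      _ ≤ _ := hstep

lemma pathWeight_le_pi {A : S → S → EReal} {π : S → ℝ}
    (hπ : LeftSuperharmonic A π) (p : ℕ → S) (n : ℕ) :
    pathWeight A p n ≤ ((π (p n) - π (p 0) : ℝ) : EReal) := by
  rw [EReal.coe_sub,
    EReal.le_sub_iff_add_le (Or.inl (EReal.coe_ne_bot _)) (Or.inl (EReal.coe_ne_top _))]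
  rw [add_comm]
  exact pi_add_pathWeight_le hπ p n

lemma star_le_pi {A : S → S → EReal} {π : S → ℝ}
    (hπ : LeftSuperharmonic A π) (x y : S) :
    star A x y ≤ ((π y - π x : ℝ) : EReal) := by
  refine iSup_le fun n => iSup_le fun p => iSup_le fun hp => ?_
  have := pathWeight_le_pi hπ p n
  rwa [hp.1, hp.2] at this

lemma plus_le_pi {A : S → S → EReal} {π : S → ℝ}
    (hπ : LeftSuperharmonic A π) (x y : S) :
    plus A x y ≤ ((π y - π x : ℝ) : EReal) := by
  refine iSup_le fun n => iSup_le fun _ => iSup_le fun p => iSup_le fun hp => ?_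
  have := pathWeight_le_pi hπ p n
  rwa [hp.1, hp.2] at this

lemma star_self_eq_zero {A : S → S → EReal} {π : S → ℝ}
    (hπ : LeftSuperharmonic A π) (x : S) : star A x x = 0 := by
  refine le_antisymm ?_ ?_
  · simpa using star_le_pi hπ x x
  · calc (0 : EReal) = pathWeight A (fun _ => x) 0 := (pathWeight_zero A _).symm
      _ ≤ star A x x :=
        le_iSup_of_le 0 (le_iSup_of_le (fun _ => x) (le_iSup_of_le ⟨rfl, rfl⟩ le_rfl))

lemma star_eq_plus {A : S → S → EReal} {i j : S} (hij : i ≠ j) :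
    star A i j = plus A i j := by
  refine le_antisymm (iSup_le fun n => ?_)
    (iSup_le fun n => iSup_le fun _ => iSup_le fun p => iSup_le fun hp =>
      le_iSup_of_le n (le_iSup_of_le p (le_iSup_of_le hp le_rfl)))
  cases n with
  | zero => exact iSup_le fun p => iSup_le fun hp => absurd (hp.1.symm.trans hp.2) hij
  | succ n =>
    exact iSup_le fun p => iSup_le fun hp =>
      le_iSup_of_le (n + 1) (le_iSup_of_le (Nat.succ_le_succ (Nat.zero_le n))
        (le_iSup_of_le p (le_iSup_of_le hp le_rfl)))

/-- Concatenation of two paths. -/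
def concatPath (p q : ℕ → S) (n : ℕ) : ℕ → S := fun k => if k < n then p k else q (k - n)

lemma pathWeight_concat (A : S → S → EReal) (p q : ℕ → S) (n : ℕ) (h : q 0 = p n) :
    ∀ m, pathWeight A p n + pathWeight A q m = pathWeight A (concatPath p q n) (n + m) := by
  have hr : ∀ k, k ≤ n → concatPath p q n k = p k := by
    intro k hk
    rcases lt_or_eq_of_le hk with hk' | hk'
    · simp [concatPath, hk']
    · subst hk'; simp [concatPath, h.symm]
  intro m
  induction m with
  | zero =>
    rw [pathWeight_zero, add_zero, Nat.add_zero]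
    refine Finset.sum_congr rfl fun k hk => ?_
    rw [Finset.mem_range] at hk
    rw [hr k hk.le, hr (k + 1) hk]
  | succ m ih =>
    have h1 : concatPath p q n (n + m) = q m := by
      simp [concatPath, Nat.not_lt.mpr (Nat.le_add_right n m)]
    have h2 : concatPath p q n (n + m + 1) = q (m + 1) := by
      have : ¬ (n + m + 1 < n) := by omega
      simp only [concatPath, if_neg this]
      congr 1
      omega
    rw [show n + (m + 1) = (n + m) + 1 from rfl,
      pathWeight_succ A (concatPath p q n) (n + m), h1, h2, ← ih,
      pathWeight_succ A q m, add_assoc]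

lemma concat_le_star {A : S → S → EReal} {x i j : S} {p q : ℕ → S} {n m : ℕ}
    (hp0 : p 0 = x) (hpn : p n = i) (hq0 : q 0 = i) (hqm : q m = j) :
    pathWeight A p n + pathWeight A q m ≤ star A x j := by
  rw [pathWeight_concat A p q n (hq0.trans hpn.symm)]
  refine le_iSup_of_le (n + m) (le_iSup_of_le (concatPath p q n)
    (le_iSup_of_le ⟨?_, ?_⟩ le_rfl))
  · by_cases h0 : 0 < n
    · simp [concatPath, h0, hp0]
    · have hn0 : n = 0 := by omega
      subst hn0
      simpa [concatPath] using hq0.trans (hpn.symm.trans hp0)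
  · have : ¬ (n + m < n) := by omega
    simp only [concatPath, if_neg this]
    rw [show n + m - n = m by omega, hqm]

lemma concat_le_plus {A : S → S → EReal} {x i j : S} {p q : ℕ → S} {n m : ℕ}
    (hm : 1 ≤ m) (hp0 : p 0 = x) (hpn : p n = i) (hq0 : q 0 = i) (hqm : q m = j) :
    pathWeight A p n + pathWeight A q m ≤ plus A x j := by
  rw [pathWeight_concat A p q n (hq0.trans hpn.symm)]
  refine le_iSup_of_le (n + m) (le_iSup_of_le (by omega) (le_iSup_of_le (concatPath p q n)
    (le_iSup_of_le ⟨?_, ?_⟩ le_rfl)))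
  · by_cases h0 : 0 < n
    · simp [concatPath, h0, hp0]
    · have hn0 : n = 0 := by omega
      subst hn0
      simpa [concatPath] using hq0.trans (hpn.symm.trans hp0)
  · have : ¬ (n + m < n) := by omega
    simp only [concatPath, if_neg this]
    rw [show n + m - n = m by omega, hqm]

lemma star_add_plus_le {A : S → S → EReal} {x i j : S} {c : EReal}
    (h : ∀ (n : ℕ) (p : ℕ → S), p 0 = x → p n = i → ∀ (m : ℕ) (q : ℕ → S), 1 ≤ m →
      q 0 = i → q m = j → pathWeight A p n + pathWeight A q m ≤ c) :
    star A x i + plus A i j ≤ c := by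
  apply EReal.add_le_of_forall_lt
  intro a' ha' b' hb'
  simp only [star, plus, lt_iSup_iff] at ha' hb'
  obtain ⟨n, p, hp, hap⟩ := ha'
  obtain ⟨m, hm, q, hq, hbq⟩ := hb'
  exact (add_le_add hap.le hbq.le).trans (h n p hp.1 hp.2 m q hm hq.1 hq.2)

lemma plus_add_plus_le {A : S → S → EReal} {x i j : S} {c : EReal}
    (h : ∀ (n : ℕ) (p : ℕ → S), 1 ≤ n → p 0 = x → p n = i → ∀ (m : ℕ) (q : ℕ → S), 1 ≤ m →
      q 0 = i → q m = j → pathWeight A p n + pathWeight A q m ≤ c) :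
    plus A x i + plus A i j ≤ c := by
  apply EReal.add_le_of_forall_lt
  intro a' ha' b' hb'
  simp only [plus, lt_iSup_iff] at ha' hb'
  obtain ⟨n, hn, p, hp, hap⟩ := ha'
  obtain ⟨m, hm, q, hq, hbq⟩ := hb'
  exact (add_le_add hap.le hbq.le).trans (h n p hn hp.1 hp.2 m q hm hq.1 hq.2)

end Aux


/-- for distinct `i, j`, the columns `K_{·i}` and `K_{·j}` of the Martin kernel
coincide iff `ρ(A) = 0`, both `i` and `j` are recurrent, and they lie in the same
recurrence class. -/
theorem martin_columns_eq_iff {S : Type*} (A : S → S → EReal)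
    (hA : ∀ i j, A i j ≠ ⊤) (π : S → ℝ) (hπ : LeftSuperharmonic A π)
    (i j : S) (hij : i ≠ j) :
    (fun x => K A π x i) = (fun x => K A π x j) ↔
      (maxCircuitMean A = 0 ∧ plus A i i = 0 ∧ plus A j j = 0 ∧
        plus A i j + plus A j i = 0) := by
  constructor
  · intro h
    have hii : K A π i i = K A π i j := congrFun h i
    have hjj : K A π j i = K A π j j := congrFun h j
    have hsii : star A i i = 0 := star_self_eq_zero hπ i
    have hsjj : star A j j = 0 := star_self_eq_zero hπ j
    simp only [K, hsii] at hii
    simp only [K, hsjj] at hjj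
    have h1 : star A i j = ((π j - π i : ℝ) : EReal) := by
      calc star A i j = star A i j - (π j : EReal) + (π j : EReal) :=
            EReal.sub_add_cancel.symm
        _ = (0 : EReal) - (π i : EReal) + (π j : EReal) := by rw [← hii]
        _ = ((π j - π i : ℝ) : EReal) := by
            rw [zero_sub, ← EReal.coe_neg, ← EReal.coe_add]
            norm_cast
            ring
    have h2 : star A j i = ((π i - π j : ℝ) : EReal) := by
      calc star A j i = star A j i - (π i : EReal) + (π i : EReal) :=
            EReal.sub_add_cancel.symm
        _ = (0 : EReal) - (π j : EReal) + (π i : EReal) := by rw [hjj]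
        _ = ((π i - π j : ℝ) : EReal) := by
            rw [zero_sub, ← EReal.coe_neg, ← EReal.coe_add]
            norm_cast
            ring
    have hpij : plus A i j = ((π j - π i : ℝ) : EReal) := (star_eq_plus hij).symm.trans h1
    have hpji : plus A j i = ((π i - π j : ℝ) : EReal) := (star_eq_plus (Ne.symm hij)).symm.trans h2
    have hsum : plus A i j + plus A j i = 0 := by
      rw [hpij, hpji, ← EReal.coe_add]
      norm_cast
      ring
    have hsum' : plus A j i + plus A i j = 0 := by rw [add_comm]; exact hsum
    have hplusii : plus A i i = 0 := by
      refine le_antisymm (by simpa using plus_le_pi hπ i i) ?_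
      calc (0 : EReal) = plus A i j + plus A j i := hsum.symm
        _ ≤ plus A i i := plus_add_plus_le fun n p hn hp0 hpn m q hm hq0 hqm =>
            concat_le_plus hm hp0 hpn hq0 hqm
    have hplusjj : plus A j j = 0 := by
      refine le_antisymm (by simpa using plus_le_pi hπ j j) ?_
      calc (0 : EReal) = plus A j i + plus A i j := hsum'.symm
        _ ≤ plus A j j := plus_add_plus_le fun n p hn hp0 hpn m q hm hq0 hqm =>
            concat_le_plus hm hp0 hpn hq0 hqm
    have hmcm_le : maxCircuitMean A ≤ 0 := by
      unfold maxCircuitMean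
      refine iSup_le fun k => iSup_le fun hk => iSup_le fun p => iSup_le fun hc => ?_
      have hw : pathWeight A p k ≤ 0 := by
        have := pathWeight_le_pi hπ p k
        rw [hc] at this
        simpa using this
      have hk1 : (1 : ℝ) ≤ (k : ℝ) := by exact_mod_cast hk
      have hkpos : (0 : ℝ) < ((k : ℝ))⁻¹ := by positivity
      revert hw
      generalize pathWeight A p k = W
      intro hw
      induction W using EReal.rec with
      | bot => rw [EReal.coe_mul_bot_of_pos hkpos]; exact bot_le
      | coe w =>
        rw [← EReal.coe_mul]
        have hw' : w ≤ 0 := by exact_mod_cast hw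
        have : ((k : ℝ))⁻¹ * w ≤ 0 := by nlinarith
        exact_mod_cast this
      | top => exact absurd hw (by simp)
    have hmcm_ge : (0 : EReal) ≤ maxCircuitMean A := by
      by_contra hneg
      push_neg at hneg
      obtain ⟨c, hMc, hc0⟩ := EReal.exists_between_coe_real hneg
      have hle : plus A i i ≤ (c : EReal) := by
        unfold plus
        refine iSup_le fun k => iSup_le fun hk => iSup_le fun p => iSup_le fun hp => ?_
        have hterm0 : (((k : ℝ)⁻¹ : ℝ) : EReal) * pathWeight A p k ≤ maxCircuitMean A := by
          unfold maxCircuitMean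
          exact le_iSup_of_le k (le_iSup_of_le hk (le_iSup_of_le p
            (le_iSup_of_le (hp.2.trans hp.1.symm) le_rfl)))
        have hterm := lt_of_le_of_lt hterm0 hMc
        have hk1 : (1 : ℝ) ≤ (k : ℝ) := by exact_mod_cast hk
        have hkpos : (0 : ℝ) < (k : ℝ) := by linarith
        have hc0' : c < 0 := by exact_mod_cast hc0
        have hw : pathWeight A p k ≤ 0 := by
          have := pathWeight_le_pi hπ p k
          rw [hp.1, hp.2] at this
          simpa using this
        revert hterm hw
        generalize pathWeight A p k = W
        intro hterm hw
        induction W using EReal.rec with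
        | bot => exact bot_le
        | coe w =>
          rw [← EReal.coe_mul, EReal.coe_lt_coe_iff] at hterm
          have hcalc : w < (k : ℝ) * c := by
            calc w = (k : ℝ) * ((k : ℝ)⁻¹ * w) := by field_simp
              _ < (k : ℝ) * c := mul_lt_mul_of_pos_left hterm hkpos
          have h2 : (k : ℝ) * c ≤ c := by nlinarith
          exact_mod_cast (hcalc.trans_le h2).le
        | top => exact absurd hw (by simp)
      rw [hplusii] at hle
      exact absurd (hle.trans_lt hc0) (lt_irrefl _)
    exact ⟨le_antisymm hmcm_le hmcm_ge, hplusii, hplusjj, hsum⟩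
  · rintro ⟨-, -, -, hsum⟩
    have hij_le : plus A i j ≤ ((π j - π i : ℝ) : EReal) := plus_le_pi hπ i j
    have hji_le : plus A j i ≤ ((π i - π j : ℝ) : EReal) := plus_le_pi hπ j i
    have hij_bot : plus A i j ≠ ⊥ := by
      intro hb0
      rw [hb0] at hsum
      simp at hsum
    have hji_bot : plus A j i ≠ ⊥ := by
      intro hb0
      rw [hb0, add_comm] at hsum
      simp at hsum
    obtain ⟨a, ha⟩ : ∃ a : ℝ, plus A i j = (a : EReal) :=
      ⟨(plus A i j).toReal,
        (EReal.coe_toReal (ne_top_of_le_ne_top (EReal.coe_ne_top _) hij_le) hij_bot).symm⟩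
    obtain ⟨b, hb⟩ : ∃ b : ℝ, plus A j i = (b : EReal) :=
      ⟨(plus A j i).toReal,
        (EReal.coe_toReal (ne_top_of_le_ne_top (EReal.coe_ne_top _) hji_le) hji_bot).symm⟩
    rw [ha, hb, ← EReal.coe_add] at hsum
    have hab : a + b = 0 := by exact_mod_cast hsum
    have ha_le : a ≤ π j - π i := by
      rw [ha] at hij_le
      exact_mod_cast hij_le
    have hb_le : b ≤ π i - π j := by
      rw [hb] at hji_le
      exact_mod_cast hji_le
    have ha_eq : a = π j - π i := by linarith
    funext x
    have h1 : star A x i + (a : EReal) ≤ star A x j := by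
      rw [← ha]
      exact star_add_plus_le fun n p hp0 hpn m q hm hq0 hqm =>
        concat_le_star hp0 hpn hq0 hqm
    have h2 : star A x j + (b : EReal) ≤ star A x i := by
      rw [← hb]
      exact star_add_plus_le fun n p hp0 hpn m q hm hq0 hqm =>
        concat_le_star hp0 hpn hq0 hqm
    have h3 : star A x j ≤ star A x i + (a : EReal) := by
      have hstep : star A x j ≤ star A x i - (b : EReal) :=
        (EReal.le_sub_iff_add_le (Or.inl (EReal.coe_ne_bot _))
          (Or.inl (EReal.coe_ne_top _))).mpr h2
      rwa [sub_eq_add_neg, ← EReal.coe_neg, show -b = a by linarith] at hstep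
    have heq : star A x j = star A x i + (a : EReal) := le_antisymm h3 h1
    show K A π x i = K A π x j
    simp only [K]
    rw [heq, sub_eq_add_neg, sub_eq_add_neg, add_assoc, ← EReal.coe_neg, ← EReal.coe_neg,
      ← EReal.coe_add]
    have hfin : (-π i : ℝ) = a + -π j := by rw [ha_eq]; ring
    rw [hfin]

end MaxPlus
end
end

section
/- Let b, b′ ∈ S be basepoints, let ℳ, ℬ, 𝒦, ℳᵐ be the Martin space, Martin boundary, Martin kernel columns and minimal Martin space constructed from π = A*_{b·}, and let ℳ′, ℬ′, 𝒦′, ℳ′ᵐ be those constructed from π′ = A*_{b′·}. Then the map φ : ℳ → ℳ′, φ(w) = w − w_{b′} (which is well defined since w_{b′} ∈ ℝ for all w ∈ ℳ), is a homeomorphism from ℳ onto ℳ′ sending K_{·j} to K′_{·j} for every j ∈ S; it maps 𝒦 onto 𝒦′, ℬ onto ℬ′, and ℳᵐ onto ℳ′ᵐ. -/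
open Filter Topology

noncomputable section

namespace MaxPlus

section ERealAux

private lemma addRR (a : EReal) (r s : ℝ) : (a + r) + s = a + ((r + s : ℝ) : EReal) := by
  induction a using EReal.rec
  · simp
  · norm_cast; ring
  · simp

private lemma subRR (a : EReal) (r s : ℝ) : (a - r) - s = a - ((r + s : ℝ) : EReal) := by
  have := addRR a (-r) (-s)
  simp only [sub_eq_add_neg, ← EReal.coe_neg, ← neg_add] at this ⊢
  rw [this]

private lemma sub_addR (a : EReal) (r : ℝ) : (a - r) + r = a := by
  have := addRR a (-r) r
  simp only [sub_eq_add_neg, ← EReal.coe_neg] at this ⊢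
  simpa using this

private lemma add_subR (a : EReal) (r : ℝ) : (a + r) - r = a := by
  have := addRR a r (-r)
  simp only [sub_eq_add_neg, ← EReal.coe_neg] at this ⊢
  simpa using this

private lemma sub_addR' (a : EReal) (r s : ℝ) : (a - r) + s = a - ((r - s : ℝ) : EReal) := by
  have := addRR a (-r) s
  simp only [sub_eq_add_neg, ← EReal.coe_neg] at this ⊢
  rw [this]
  congr 1
  norm_cast
  ring

private lemma rearrange (a : EReal) (r s u v : ℝ) (h : r + s = u + v) :
    (r : EReal) + (a + s) = ((u : EReal) + a) + v := by
  induction a using EReal.rec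
  · simp
  · norm_cast; linarith
  · simp

private lemma continuousAt_sub2 (p : EReal × EReal) (h : p.2 ≠ ⊥) (h' : p.2 ≠ ⊤) :
    ContinuousAt (fun q : EReal × EReal => q.1 - q.2) p := by
  have hn : ContinuousAt (fun q : EReal × EReal => (q.1, -q.2)) p :=
    continuousAt_fst.prodMk ((continuous_neg.continuousAt).comp continuousAt_snd)
  have ha : ContinuousAt (fun q : EReal × EReal => q.1 + q.2)
      ((fun q : EReal × EReal => (q.1, -q.2)) p) :=
    EReal.continuousAt_add (Or.inr (by simp [EReal.neg_eq_bot_iff, h']))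
      (Or.inr (by simp [EReal.neg_eq_top_iff, h]))
  have := ContinuousAt.comp (x := p) (g := fun q : EReal × EReal => q.1 + q.2)
    (f := fun q : EReal × EReal => (q.1, -q.2)) ha hn
  simpa [sub_eq_add_neg, Function.comp_def] using this

end ERealAux

section PathAux

variable {S : Type*}

lemma pathWeight_le_star (A : S → S → EReal) (p : ℕ → S) (n : ℕ) :
    pathWeight A p n ≤ star A (p 0) (p n) := by
  unfold star
  exact le_iSup_of_le n (le_iSup_of_le p (le_iSup_of_le ⟨rfl, rfl⟩ le_rfl))

lemma star_trans (A : S → S → EReal) (i k j : S) :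
    star A i k + star A k j ≤ star A i j := by
  refine EReal.add_le_of_forall_lt fun a ha b hb => ?_
  simp only [star, lt_iSup_iff] at ha hb
  obtain ⟨m, p, ⟨hp0, hpm⟩, hap⟩ := ha
  obtain ⟨n, q, ⟨hq0, hqn⟩, hbq⟩ := hb
  set r : ℕ → S := fun t => if t < m then p t else q (t - m) with hr
  have hrm : ∀ t, m ≤ t → r t = q (t - m) := fun t ht => if_neg (not_lt.2 ht)
  have key : pathWeight A r (m + n) = pathWeight A p m + pathWeight A q n := by
    unfold pathWeight
    rw [Finset.sum_range_add]
    congr 1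
    · refine Finset.sum_congr rfl fun t ht => ?_
      have htm : t < m := Finset.mem_range.1 ht
      have h1 : r t = p t := if_pos htm
      have h2 : r (t + 1) = p (t + 1) := by
        rcases lt_or_ge (t + 1) m with h | h
        · exact if_pos h
        · have : t + 1 = m := le_antisymm htm h
          rw [hrm _ h, this, Nat.sub_self, hq0, ← hpm]
      rw [h1, h2]
    · refine Finset.sum_congr rfl fun t _ => ?_
      have h1 : r (m + t) = q t := by
        rw [hrm _ (Nat.le_add_right m t), Nat.add_sub_cancel_left]
      have h2 : r (m + t + 1) = q (t + 1) := by
        rw [hrm _ (by omega)]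
        congr 1
        omega
      rw [h1, h2]
  have hr0 : r 0 = i := by
    rcases Nat.eq_zero_or_pos m with h | h
    · subst h
      have h1 : r 0 = q 0 := hrm 0 le_rfl
      rw [h1, hq0, ← hpm, hp0]
    · have h1 : r 0 = p 0 := if_pos h
      rw [h1, hp0]
  have hrn : r (m + n) = j := by
    rw [hrm _ (Nat.le_add_right m n), Nat.add_sub_cancel_left, hqn]
  calc a + b ≤ pathWeight A p m + pathWeight A q n := add_le_add hap.le hbq.le
    _ = pathWeight A r (m + n) := key.symm
    _ ≤ star A (r 0) (r (m + n)) := pathWeight_le_star A r (m + n)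
    _ = star A i j := by rw [hr0, hrn]

end PathAux

section Basepoint

variable {S : Type*} {A : S → S → EReal} {π π' : S → ℝ} {b b' : S}

/-- Triangle inequality for the potentials of two basepoints. -/
lemma pi_triangle (hb : ∀ j, star A b j = (π j : EReal))
    (hb' : ∀ j, star A b' j = (π' j : EReal)) (j : S) :
    π' b + π j ≤ π' j := by
  have h := star_trans A b' b j
  rw [hb' b, hb j, hb' j] at h
  exact_mod_cast h

lemma K_base (hb : ∀ j, star A b j = (π j : EReal)) (j : S) :
    K A π b j = 0 := by
  rw [K, hb j, ← EReal.coe_sub, sub_self, EReal.coe_zero]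

lemma K_base' (hb' : ∀ j, star A b' j = (π' j : EReal)) (j : S) :
    K A π b' j = ((π' j - π j : ℝ) : EReal) := by
  rw [K, hb' j, EReal.coe_sub]

lemma K_shift (hb : ∀ j, star A b j = (π j : EReal))
    (hb' : ∀ j, star A b' j = (π' j : EReal)) (j x : S) :
    K A π x j - K A π b' j = K A π' x j := by
  rw [K_base' hb', K, K, subRR]
  congr 2
  ring

/-- The global base-change map. -/
def shiftMap (c : S) : (S → EReal) → (S → EReal) := fun v x => v x - v c

lemma shiftMap_ker (hb : ∀ j, star A b j = (π j : EReal))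
    (hb' : ∀ j, star A b' j = (π' j : EReal)) (j : S) :
    shiftMap b' (fun i => K A π i j) = fun i => K A π' i j :=
  funext fun x => K_shift hb hb' j x

lemma martin_facts (hb : ∀ j, star A b j = (π j : EReal))
    (hb' : ∀ j, star A b' j = (π' j : EReal)) :
    ∀ w ∈ martin A π, w b = 0 ∧ w b' ∈ Set.Icc ((π' b : ℝ) : EReal) ((-π b' : ℝ) : EReal) := by
  have hclosed : IsClosed {w : S → EReal |
      w b = 0 ∧ w b' ∈ Set.Icc ((π' b : ℝ) : EReal) ((-π b' : ℝ) : EReal)} :=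
    IsClosed.inter (isClosed_eq (continuous_apply b) continuous_const)
      (isClosed_Icc.preimage (continuous_apply b'))
  have hsub : kerCols A π ⊆ {w : S → EReal |
      w b = 0 ∧ w b' ∈ Set.Icc ((π' b : ℝ) : EReal) ((-π b' : ℝ) : EReal)} := by
    rintro _ ⟨j, rfl⟩
    refine ⟨K_base hb j, ?_, ?_⟩
    · show ((π' b : ℝ) : EReal) ≤ K A π b' j
      rw [K_base' hb']
      exact_mod_cast (by linarith [pi_triangle hb hb' j] : (π' b : ℝ) ≤ π' j - π j)
    · show K A π b' j ≤ ((-π b' : ℝ) : EReal)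
      rw [K_base' hb']
      exact_mod_cast (by linarith [pi_triangle hb' hb j] : (π' j - π j : ℝ) ≤ -π b')
  exact fun w hw => closure_minimal hsub hclosed hw

lemma martin_base'_real (hb : ∀ j, star A b j = (π j : EReal))
    (hb' : ∀ j, star A b' j = (π' j : EReal)) {w : S → EReal} (hw : w ∈ martin A π) :
    ∃ β : ℝ, w b' = (β : EReal) := by
  obtain ⟨-, h1, h2⟩ := martin_facts hb hb' w hw
  have hbot : w b' ≠ ⊥ := fun h => by simp [h] at h1
  have htop : w b' ≠ ⊤ := fun h => by simp [h] at h2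
  exact ⟨(w b').toReal, (EReal.coe_toReal htop hbot).symm⟩

end Basepoint

section Homeo

variable {S : Type*} {A : S → S → EReal} {π π' : S → ℝ} {b b' : S}

lemma continuousAt_shiftMap {c : S} {v : S → EReal} (h : v c ≠ ⊥) (h' : v c ≠ ⊤) :
    ContinuousAt (shiftMap c) v := by
  rw [continuousAt_pi]
  intro x
  have hev : ContinuousAt (fun u : S → EReal => ((u x, u c) : EReal × EReal)) v :=
    ((continuous_apply x).prodMk (continuous_apply c)).continuousAt
  have hsub : ContinuousAt (fun q : EReal × EReal => q.1 - q.2)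
      ((fun u : S → EReal => ((u x, u c) : EReal × EReal)) v) :=
    continuousAt_sub2 _ h h'
  exact ContinuousAt.comp (x := v) (g := fun q : EReal × EReal => q.1 - q.2)
    (f := fun u : S → EReal => ((u x, u c) : EReal × EReal)) hsub hev

lemma continuousAt_shiftMap_of_martin (hb : ∀ j, star A b j = (π j : EReal))
    (hb' : ∀ j, star A b' j = (π' j : EReal)) {w : S → EReal} (hw : w ∈ martin A π) :
    ContinuousAt (shiftMap b') w := by
  obtain ⟨β, hβ⟩ := martin_base'_real hb hb' hw
  exact continuousAt_shiftMap (by simp [hβ]) (by simp [hβ])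

lemma shiftMap_mapsTo (hb : ∀ j, star A b j = (π j : EReal))
    (hb' : ∀ j, star A b' j = (π' j : EReal)) :
    Set.MapsTo (shiftMap b') (martin A π) (martin A π') := by
  intro w hw
  have hc : ContinuousAt (shiftMap b') w := continuousAt_shiftMap_of_martin hb hb' hw
  have h1 : shiftMap b' w ∈ closure (shiftMap b' '' kerCols A π) :=
    hc.continuousWithinAt.mem_closure_image hw
  refine closure_mono ?_ h1
  rintro _ ⟨_, ⟨j, rfl⟩, rfl⟩
  exact ⟨j, (shiftMap_ker hb hb' j).symm⟩

lemma shiftMap_invOn (hb : ∀ j, star A b j = (π j : EReal))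
    (hb' : ∀ j, star A b' j = (π' j : EReal)) {w : S → EReal} (hw : w ∈ martin A π) :
    shiftMap b (shiftMap b' w) = w := by
  obtain ⟨hwb, -⟩ := martin_facts hb hb' w hw
  obtain ⟨β, hβ⟩ := martin_base'_real hb hb' hw
  funext x
  show (w x - w b') - (w b - w b') = w x
  rw [hwb, hβ]
  have h0 : (0 : EReal) - (β : EReal) = ((-β : ℝ) : EReal) := by
    rw [← EReal.coe_zero, ← EReal.coe_sub]
    norm_num
  rw [h0, subRR]
  norm_num

/-- The base-change homeomorphism between the two Martin spaces. -/
def baseChangeHomeo (A : S → S → EReal) (π π' : S → ℝ) (b b' : S)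
    (hb : ∀ j, star A b j = (π j : EReal))
    (hb' : ∀ j, star A b' j = (π' j : EReal)) :
    ↥(martin A π) ≃ₜ ↥(martin A π') where
  toFun w := ⟨shiftMap b' w, shiftMap_mapsTo hb hb' w.2⟩
  invFun v := ⟨shiftMap b v, shiftMap_mapsTo hb' hb v.2⟩
  left_inv w := Subtype.ext (shiftMap_invOn hb hb' w.2)
  right_inv v := Subtype.ext (shiftMap_invOn hb' hb v.2)
  continuous_toFun := by
    apply Continuous.subtype_mk
    rw [continuous_iff_continuousAt]
    intro w
    exact (continuousAt_shiftMap_of_martin hb hb' w.2).comp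
      continuous_subtype_val.continuousAt
  continuous_invFun := by
    apply Continuous.subtype_mk
    rw [continuous_iff_continuousAt]
    intro v
    exact (continuousAt_shiftMap_of_martin hb' hb v.2).comp
      continuous_subtype_val.continuousAt

end Homeo

section FilterAux

open Filter

variable {S : Type*} {A : S → S → EReal} {π π' : S → ℝ} {b b' : S}

/-- The filter of indices `j` such that `K_{·j}` is close to `w`. -/
def Gf (A : S → S → EReal) (π : S → ℝ) (w : S → EReal) : Filter S :=
  comap (fun j => fun i => K A π i j) (𝓝 w)

lemma mu_eq_limsup (A : S → S → EReal) (π : S → ℝ) (u w : S → EReal) :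
    mu A π u w = limsup (fun j => (π j : EReal) + u j) (Gf A π w) := by
  rw [Filter.limsup_eq_iInf_iSup]
  apply le_antisymm
  · refine le_iInf₂ fun s hs => ?_
    obtain ⟨W, hW, hWs⟩ := mem_comap.1 hs
    refine iInf₂_le_of_le W hW ?_
    exact iSup_le fun j => iSup_le fun hj =>
      le_iSup₂ (f := fun a (_ : a ∈ s) => (π a : EReal) + u a) j (hWs hj)
  · refine le_iInf₂ fun W hW => ?_
    refine iInf₂_le_of_le ((fun j => fun i => K A π i j) ⁻¹' W) (preimage_mem_comap hW) ?_
    exact iSup_le fun j => iSup_le fun hj =>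
      le_iSup₂ (f := fun j (_ : (fun i => K A π i j) ∈ W) => (π j : EReal) + u j) j hj

lemma flat_eq_liminf (A : S → S → EReal) (π : S → ℝ) (w : S → EReal) (i : S) :
    flat A π w i = liminf (fun j => Kflat A π i j) (Gf A π w) := by
  rw [Filter.liminf_eq_iSup_iInf]
  apply le_antisymm
  · refine iSup₂_le fun W hW => ?_
    refine le_iSup₂_of_le ((fun j => fun i => K A π i j) ⁻¹' W) (preimage_mem_comap hW) ?_
    exact le_iInf fun j => le_iInf fun hj => iInf₂_le j hj
  · refine iSup₂_le fun s hs => ?_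
    obtain ⟨W, hW, hWs⟩ := mem_comap.1 hs
    refine le_iSup₂_of_le W hW ?_
    exact le_iInf fun j => le_iInf fun hj => iInf₂_le j (hWs hj)

lemma Gf_neBot {w : S → EReal} (hw : w ∈ martin A π) : (Gf A π w).NeBot := by
  unfold Gf
  rw [Filter.comap_neBot_iff]
  intro U hU
  obtain ⟨v, hvU, hvK⟩ := mem_closure_iff_nhds.1 hw U hU
  obtain ⟨j, rfl⟩ := hvK
  exact ⟨j, hvU⟩

lemma tendsto_K_eval (A : S → S → EReal) (π : S → ℝ) (w : S → EReal) (x : S) :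
    Tendsto (fun j => K A π x j) (Gf A π w) (𝓝 (w x)) :=
  (((continuous_apply x).tendsto w)).comp tendsto_comap

section Shift

variable {ι : Type*} {G : Filter ι} [G.NeBot]

lemma tendsto_coe_neg {c : ι → ℝ} {β : ℝ}
    (hc : Tendsto (fun j => ((c j : ℝ) : EReal)) G (𝓝 ((β : ℝ) : EReal))) :
    Tendsto (fun j => ((-c j : ℝ) : EReal)) G (𝓝 ((-β : ℝ) : EReal)) := by
  rw [EReal.tendsto_coe] at hc ⊢
  exact hc.neg

lemma limsup_add_realconst (u : ι → EReal) (c : ι → ℝ) (β : ℝ)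
    (hc : Tendsto (fun j => ((c j : ℝ) : EReal)) G (𝓝 ((β : ℝ) : EReal))) :
    limsup (fun j => u j + (c j : EReal)) G = limsup u G + (β : EReal) := by
  have h1 : limsup (fun j => ((c j : ℝ) : EReal)) G = ((β : ℝ) : EReal) := hc.limsup_eq
  have h3 : limsup (fun j => ((-c j : ℝ) : EReal)) G = ((-β : ℝ) : EReal) :=
    (tendsto_coe_neg hc).limsup_eq
  apply le_antisymm
  · have h := EReal.limsup_add_le (f := G) (u := u) (v := fun j => ((c j : ℝ) : EReal))
      (Or.inr (by rw [h1]; exact EReal.coe_ne_top β))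
      (Or.inr (by rw [h1]; exact EReal.coe_ne_bot β))
    rw [h1] at h
    exact h
  · have key : limsup u G = limsup (fun j => (u j + (c j : EReal)) + ((-c j : ℝ) : EReal)) G := by
      congr 1
      funext j
      rw [addRR]
      simp
    have h := EReal.limsup_add_le (f := G) (u := fun j => u j + (c j : EReal))
      (v := fun j => ((-c j : ℝ) : EReal))
      (Or.inr (by rw [h3]; exact EReal.coe_ne_top _))
      (Or.inr (by rw [h3]; exact EReal.coe_ne_bot _))
    replace h : limsup (fun j => (u j + (c j : EReal)) + ((-c j : ℝ) : EReal)) G ≤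
        limsup (fun j => u j + (c j : EReal)) G + limsup (fun j => ((-c j : ℝ) : EReal)) G := h
    rw [h3, ← key] at h
    calc limsup u G + (β : EReal)
        ≤ (limsup (fun j => u j + (c j : EReal)) G + ((-β : ℝ) : EReal)) + (β : EReal) :=
          add_le_add h le_rfl
      _ = limsup (fun j => u j + (c j : EReal)) G := by rw [addRR]; simp

lemma liminf_add_realconst (u : ι → EReal) (c : ι → ℝ) (β : ℝ)
    (hc : Tendsto (fun j => ((c j : ℝ) : EReal)) G (𝓝 ((β : ℝ) : EReal))) :
    liminf (fun j => u j + (c j : EReal)) G = liminf u G + (β : EReal) := by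
  have h1 : liminf (fun j => ((c j : ℝ) : EReal)) G = ((β : ℝ) : EReal) := hc.liminf_eq
  have h3 : liminf (fun j => ((-c j : ℝ) : EReal)) G = ((-β : ℝ) : EReal) :=
    (tendsto_coe_neg hc).liminf_eq
  apply le_antisymm
  · have key : limsup u G = limsup (fun j => (u j + (c j : EReal)) + ((-c j : ℝ) : EReal)) G := by
      congr 1; funext j; rw [addRR]; simp
    have h := EReal.le_liminf_add (f := G) (u := fun j => u j + (c j : EReal))
      (v := fun j => ((-c j : ℝ) : EReal))
    rw [h3] at h
    have h' : liminf (fun j => u j + (c j : EReal)) G + ((-β : ℝ) : EReal) ≤ liminf u G := by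
      refine le_trans h (le_of_eq ?_)
      congr 1
      funext j
      show (u j + (c j : EReal)) + ((-c j : ℝ) : EReal) = u j
      rw [addRR]; simp
    calc liminf (fun j => u j + (c j : EReal)) G
        = (liminf (fun j => u j + (c j : EReal)) G + ((-β : ℝ) : EReal)) + (β : EReal) := by
          rw [addRR]; simp
      _ ≤ liminf u G + (β : EReal) := add_le_add h' le_rfl
  · have h := EReal.le_liminf_add (f := G) (u := u) (v := fun j => ((c j : ℝ) : EReal))
    rw [h1] at h
    exact h

end Shift

end FilterAux

section HflatShift

open Filter

variable {S : Type*} {A : S → S → EReal} {π π' : S → ℝ} {b b' : S}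

lemma Gf_eq (hb : ∀ j, star A b j = (π j : EReal))
    (hb' : ∀ j, star A b' j = (π' j : EReal)) {w : S → EReal} (hw : w ∈ martin A π) :
    Gf A π' (shiftMap b' w) = Gf A π w := by
  have hΦ : shiftMap b' w ∈ martin A π' := shiftMap_mapsTo hb hb' hw
  apply le_antisymm
  · have ht : Tendsto (shiftMap b) (𝓝 (shiftMap b' w)) (𝓝 w) := by
      have h := continuousAt_shiftMap_of_martin hb' hb hΦ
      rwa [ContinuousAt, shiftMap_invOn hb hb' hw] at h
    calc Gf A π' (shiftMap b' w)
        ≤ comap (fun j => fun i => K A π' i j) (comap (shiftMap b) (𝓝 w)) :=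
          comap_mono (tendsto_iff_comap.1 ht)
      _ = comap ((shiftMap b) ∘ (fun j => fun i => K A π' i j)) (𝓝 w) := comap_comap
      _ = Gf A π w := by
          unfold Gf
          congr 1
          funext j
          exact shiftMap_ker hb' hb j
  · have ht : Tendsto (shiftMap b') (𝓝 w) (𝓝 (shiftMap b' w)) :=
      continuousAt_shiftMap_of_martin hb hb' hw
    calc Gf A π w
        ≤ comap (fun j => fun i => K A π i j) (comap (shiftMap b') (𝓝 (shiftMap b' w))) :=
          comap_mono (tendsto_iff_comap.1 ht)
      _ = comap ((shiftMap b') ∘ (fun j => fun i => K A π i j)) (𝓝 (shiftMap b' w)) :=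
          comap_comap
      _ = Gf A π' (shiftMap b' w) := by
          unfold Gf
          congr 1
          funext j
          exact shiftMap_ker hb hb' j

lemma tendsto_diff (hb' : ∀ j, star A b' j = (π' j : EReal)) {w : S → EReal} {β : ℝ}
    (hβ : w b' = (β : EReal)) :
    Tendsto (fun j => ((π' j - π j : ℝ) : EReal)) (Gf A π w) (𝓝 ((β : ℝ) : EReal)) := by
  have h := tendsto_K_eval A π w b'
  rw [show (fun j => K A π b' j) = fun j => ((π' j - π j : ℝ) : EReal) from
    funext fun j => K_base' hb' j, hβ] at h
  exact h

lemma flat_shift (hb : ∀ j, star A b j = (π j : EReal))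
    (hb' : ∀ j, star A b' j = (π' j : EReal)) {w : S → EReal} (hw : w ∈ martin A π)
    {β : ℝ} (hβ : w b' = (β : EReal)) (i : S) :
    flat A π' (shiftMap b' w) i = flat A π w i + ((-β : ℝ) : EReal) := by
  haveI : (Gf A π w).NeBot := Gf_neBot hw
  rw [flat_eq_liminf, Gf_eq hb hb' hw]
  have hpt : (fun j => Kflat A π' i j) =
      fun j => Kflat A π i j + ((-(π' j - π j) : ℝ) : EReal) := by
    funext j
    rw [Kflat, Kflat, sub_addR']
    congr 2
    ring
  rw [hpt, liminf_add_realconst _ _ (-β) (tendsto_coe_neg (tendsto_diff hb' hβ)),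
    ← flat_eq_liminf]

lemma Hflat_shift (hb : ∀ j, star A b j = (π j : EReal))
    (hb' : ∀ j, star A b' j = (π' j : EReal)) {w : S → EReal} (hw : w ∈ martin A π) :
    Hflat A π' (shiftMap b' w) (shiftMap b' w) = Hflat A π w w := by
  obtain ⟨β, hβ⟩ := martin_base'_real hb hb' hw
  haveI : (Gf A π w).NeBot := Gf_neBot hw
  unfold Hflat
  rw [mu_eq_limsup, mu_eq_limsup, Gf_eq hb hb' hw]
  have hc0 : Tendsto (fun j => ((π' j - π j - β : ℝ) : EReal)) (Gf A π w)
      (𝓝 ((0 : ℝ) : EReal)) := by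
    have h := tendsto_diff (π := π) hb' hβ
    rw [EReal.tendsto_coe] at h ⊢
    simpa using h.sub_const β
  have hpt : (fun j => (π' j : EReal) + flat A π' (shiftMap b' w) j) =
      fun j => ((π j : EReal) + flat A π w j) + ((π' j - π j - β : ℝ) : EReal) := by
    funext j
    rw [flat_shift hb hb' hw hβ j]
    exact rearrange (flat A π w j) (π' j) (-β) (π j) (π' j - π j - β) (by ring)
  rw [hpt, limsup_add_realconst _ _ 0 hc0]
  simp

end HflatShift


/-- the Martin spaces (boundaries, kernel columns, minimal Martin spaces)
constructed from two basepoints `b, b'` are homeomorphic via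
`φ(w) = w - w_{b'}` (well defined since `w_{b'} ∈ ℝ` on `ℳ`), which sends `K_{·j}` to
`K'_{·j}`, `𝒦` onto `𝒦'`, `ℬ` onto `ℬ'` and `ℳᵐ` onto `ℳ'ᵐ`. -/
theorem basepoint_change_homeomorph {S : Type*} (A : S → S → EReal)
    (hA : ∀ i j, A i j ≠ ⊤) (b b' : S) (π π' : S → ℝ)
    (hb : ∀ j, star A b j = (π j : EReal))
    (hb' : ∀ j, star A b' j = (π' j : EReal)) :
    (∀ w ∈ martin A π, w b' ≠ ⊥ ∧ w b' ≠ ⊤) ∧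
    (∀ j x : S, K A π x j - K A π b' j = K A π' x j) ∧
    ∃ e : ↥(martin A π) ≃ₜ ↥(martin A π'),
      (∀ w : ↥(martin A π), ∀ x : S,
          (e w : S → EReal) x = (w : S → EReal) x - (w : S → EReal) b') ∧
      (∀ w : ↥(martin A π),
          ((w : S → EReal) ∈ kerCols A π ↔ (e w : S → EReal) ∈ kerCols A π')) ∧
      (∀ w : ↥(martin A π),
          ((w : S → EReal) ∈ martin A π \ kerCols A π ↔
            (e w : S → EReal) ∈ martin A π' \ kerCols A π')) ∧
      (∀ w : ↥(martin A π),
          ((w : S → EReal) ∈ martinMin A π ↔ (e w : S → EReal) ∈ martinMin A π')) := by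
  refine ⟨?_, fun j x => K_shift hb hb' j x, ?_⟩
  · intro w hw
    obtain ⟨β, hβ⟩ := martin_base'_real hb hb' hw
    exact ⟨by simp [hβ], by simp [hβ]⟩
  · refine ⟨baseChangeHomeo A π π' b b' hb hb', fun w x => rfl, ?_⟩
    have hKiff : ∀ w : ↥(martin A π),
        ((w : S → EReal) ∈ kerCols A π ↔
          ((baseChangeHomeo A π π' b b' hb hb' w : S → EReal) ∈ kerCols A π')) := by
      intro w
      constructor
      · rintro ⟨j, hj⟩
        refine ⟨j, ?_⟩
        show (fun i => K A π' i j) = shiftMap b' (w : S → EReal)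
        rw [← hj]
        exact (shiftMap_ker hb hb' j).symm
      · rintro ⟨j, hj⟩
        refine ⟨j, ?_⟩
        have hj' : (fun i => K A π' i j) = shiftMap b' (w : S → EReal) := hj
        rw [← shiftMap_invOn hb hb' w.2, ← hj']
        exact (shiftMap_ker hb' hb j).symm
    refine ⟨hKiff, ?_, ?_⟩
    · intro w
      constructor
      · rintro ⟨-, h2⟩
        exact ⟨(baseChangeHomeo A π π' b b' hb hb' w).2, fun hk => h2 ((hKiff w).2 hk)⟩
      · rintro ⟨-, h2⟩
        exact ⟨w.2, fun hk => h2 ((hKiff w).1 hk)⟩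
    · intro w
      constructor
      · rintro ⟨-, h0⟩
        refine ⟨(baseChangeHomeo A π π' b b' hb hb' w).2, ?_⟩
        show Hflat A π' (shiftMap b' (w : S → EReal)) (shiftMap b' (w : S → EReal)) = 0
        rw [Hflat_shift hb hb' w.2]
        exact h0
      · rintro ⟨-, h0⟩
        refine ⟨w.2, ?_⟩
        have h0' : Hflat A π' (shiftMap b' (w : S → EReal))
            (shiftMap b' (w : S → EReal)) = 0 := h0
        rw [Hflat_shift hb hb' w.2] at h0'
        exact h0'


end MaxPlus
end
end
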